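/- For every admissible finite set L ⊆ ℕ ∪ {0}, there exists a tree R on at most 7 vertices and a vertex v of R such that L(v) ∩ {0,1,2} = L ∩ {0,1,2}, and 3 ∈ L(v) if and only if L \ {0,1,2} is nonempty. -/

import Mathlib

/-- The leaf distance set of the vertex `v` in the graph `G`: the set of distances from
`v` to the leaves (vertices of degree at most 1) of `G`. -/
def leafDistSet {V : Type} (G : SimpleGraph V) (v : V) : Set ℕ :=
  {d : ℕ | ∃ u : V, Nat.card (G.neighborSet u) ≤ 1 ∧ G.dist v u = d}

/-- A set `L ⊆ ℕ ∪ {0}` is admissible if it is the leaf distance set of some vertex of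
some finite tree. -/
def Admissible (L : Set ℕ) : Prop :=
  ∃ (V : Type) (_ : Fintype V) (G : SimpleGraph V) (v : V),
    G.IsTree ∧ L = leafDistSet G v

open SimpleGraph


variable {V : Type}

/-- Reachability within `n` steps. -/
def reachIn (G : SimpleGraph V) : ℕ → V → V → Prop
  | 0 => fun a b => a = b
  | n+1 => fun a b => a = b ∨ ∃ x, G.Adj a x ∧ reachIn G n x b

lemma reachIn_zero (G : SimpleGraph V) (a b : V) : reachIn G 0 a b ↔ a = b := Iff.rfl

lemma reachIn_succ (G : SimpleGraph V) (n : ℕ) (a b : V) :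
    reachIn G (n+1) a b ↔ a = b ∨ ∃ x, G.Adj a x ∧ reachIn G n x b := Iff.rfl

instance reachIn.dec (G : SimpleGraph V) [Fintype V] [DecidableEq V] [DecidableRel G.Adj] :
    ∀ n, DecidableRel (reachIn G n)
  | 0 => fun a b => decidable_of_iff _ (reachIn_zero G a b).symm
  | n+1 => fun a b =>
      haveI := reachIn.dec G n
      decidable_of_iff _ (reachIn_succ G n a b).symm

lemma reachIn_iff_exists_walk (G : SimpleGraph V) (n : ℕ) (a b : V) :
    reachIn G n a b ↔ ∃ p : G.Walk a b, p.length ≤ n := by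
  induction n generalizing a with
  | zero =>
    rw [reachIn_zero]
    constructor
    · rintro rfl; exact ⟨Walk.nil, by simp⟩
    · rintro ⟨p, hp⟩
      cases p with
      | nil => rfl
      | cons h q => simp at hp
  | succ n ih =>
    rw [reachIn_succ]
    constructor
    · rintro (rfl | ⟨x, hx, hr⟩)
      · exact ⟨Walk.nil, by simp⟩
      · obtain ⟨p, hp⟩ := (ih x).1 hr
        exact ⟨Walk.cons hx p, by simpa using Nat.succ_le_succ hp⟩
    · rintro ⟨p, hp⟩
      cases p with
      | nil => exact Or.inl rfl
      | cons h q =>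
        refine Or.inr ⟨_, h, (ih _).2 ⟨q, ?_⟩⟩
        simpa using Nat.le_of_succ_le_succ (by simpa using hp)

lemma reachable_of_reachIn {G : SimpleGraph V} {n : ℕ} {a b : V} (h : reachIn G n a b) :
    G.Reachable a b := by
  obtain ⟨p, _⟩ := (reachIn_iff_exists_walk G n a b).1 h
  exact ⟨p⟩

lemma reachIn_of_reachable [Fintype V] {G : SimpleGraph V} {n : ℕ} {a b : V}
    (hn : Fintype.card V ≤ n + 1) (h : G.Reachable a b) : reachIn G n a b := by
  classical
  obtain ⟨p, hp, -⟩ := h.exists_path_of_dist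
  exact (reachIn_iff_exists_walk G n a b).2 ⟨p, Nat.le_of_lt_succ (lt_of_lt_of_le hp.length_lt hn)⟩

lemma dist_eq_iff_reachIn {G : SimpleGraph V} {a b : V} (hr : G.Reachable a b) (n : ℕ) :
    G.dist a b = n ↔ reachIn G n a b ∧ (n = 0 ∨ ¬ reachIn G (n-1) a b) := by
  constructor
  · rintro rfl
    obtain ⟨p, hp⟩ := hr.exists_walk_length_eq_dist
    refine ⟨(reachIn_iff_exists_walk _ _ _ _).2 ⟨p, le_of_eq hp⟩, ?_⟩
    rcases Nat.eq_zero_or_pos (G.dist a b) with h0 | hpos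
    · exact Or.inl h0
    · refine Or.inr fun hc => ?_
      obtain ⟨q, hq⟩ := (reachIn_iff_exists_walk _ _ _ _).1 hc
      have := SimpleGraph.dist_le q
      omega
  · rintro ⟨h1, h2⟩
    obtain ⟨p, hp⟩ := (reachIn_iff_exists_walk _ _ _ _).1 h1
    have hle : G.dist a b ≤ n := le_trans (SimpleGraph.dist_le p) hp
    rcases h2 with rfl | h2
    · omega
    · by_contra hne
      have hlt : G.dist a b ≤ n - 1 := by omega
      obtain ⟨q, hq⟩ := hr.exists_walk_length_eq_dist
      exact h2 ((reachIn_iff_exists_walk _ _ _ _).2 ⟨q, by omega⟩)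

lemma connected_of_reachIn [Fintype V] {G : SimpleGraph V} (c : V) (n : ℕ)
    (h : ∀ b, reachIn G n c b) : G.Connected := by
  exact (connected_iff_exists_forall_reachable G).2 ⟨c, fun b => reachable_of_reachIn (h b)⟩

lemma isTree_of_checks [Fintype V] [DecidableEq V] {G : SimpleGraph V} (c : V) (n : ℕ)
    (hn : Fintype.card V ≤ n + 1)
    (hconn : ∀ b, reachIn G n c b)
    (hbridge : ∀ a b, G.Adj a b → ¬ reachIn (G \ fromEdgeSet {s(a,b)}) n a b) : G.IsTree := by
  refine ⟨connected_of_reachIn c n hconn, ?_⟩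
  rw [isAcyclic_iff_forall_adj_isBridge]
  intro v w hvw
  rw [isBridge_iff]
  exact fun hr => hbridge v w hvw (reachIn_of_reachable hn hr)

/-- Graph with one (undirected) edge removed, stated in a decidable-friendly way. -/
def delEdge (G : SimpleGraph V) (a b : V) : SimpleGraph V where
  Adj x y := G.Adj x y ∧ ¬((x = a ∧ y = b) ∨ (x = b ∧ y = a))
  symm := by
    constructor
    rintro x y ⟨h1, h2⟩
    exact ⟨h1.symm, fun hc => h2 (hc.symm.imp (fun h => ⟨h.2, h.1⟩) (fun h => ⟨h.2, h.1⟩))⟩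
  loopless := ⟨fun x hx => G.ne_of_adj hx.1 rfl⟩

instance delEdge.dec [DecidableEq V] {G : SimpleGraph V} [DecidableRel G.Adj] (a b : V) :
    DecidableRel (delEdge G a b).Adj := fun x y =>
      inferInstanceAs (Decidable (G.Adj x y ∧ ¬((x = a ∧ y = b) ∨ (x = b ∧ y = a))))

lemma delEdge_eq (G : SimpleGraph V) (a b : V) :
    delEdge G a b = G \ fromEdgeSet {s(a,b)} := by
  ext x y
  simp only [delEdge, sdiff_adj, fromEdgeSet_adj, Set.mem_singleton_iff, Sym2.eq_iff]
  constructor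
  · rintro ⟨h1, h2⟩
    exact ⟨h1, fun hc => h2 hc.1⟩
  · rintro ⟨h1, h2⟩
    exact ⟨h1, fun hc => h2 ⟨hc, G.ne_of_adj h1⟩⟩

lemma isTree_of_checks' [Fintype V] [DecidableEq V] {G : SimpleGraph V} (c : V) (n : ℕ)
    (hn : Fintype.card V ≤ n + 1)
    (hconn : ∀ b, reachIn G n c b)
    (hbridge : ∀ a b, G.Adj a b → ¬ reachIn (delEdge G a b) n a b) : G.IsTree := by
  refine isTree_of_checks c n hn hconn ?_
  intro a b hab
  rw [← delEdge_eq]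
  exact hbridge a b hab


lemma mem_leafDistSet_iff [Fintype V] {G : SimpleGraph V} [DecidableRel G.Adj]
    (hc : G.Connected) (v : V) (d : ℕ) :
    d ∈ leafDistSet G v ↔
      ∃ u, G.degree u ≤ 1 ∧ (reachIn G d v u ∧ (d = 0 ∨ ¬ reachIn G (d-1) v u)) := by
  have hcard : ∀ u : V, Nat.card (G.neighborSet u) = G.degree u := fun u => by
    rw [Nat.card_eq_fintype_card]
    exact G.card_neighborSet_eq_degree u
  constructor
  · rintro ⟨u, h1, h2⟩
    rw [hcard] at h1
    exact ⟨u, h1, (dist_eq_iff_reachIn (hc v u) d).1 h2⟩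
  · rintro ⟨u, h1, h2⟩
    exact ⟨u, by rw [hcard]; exact h1, (dist_eq_iff_reachIn (hc v u) d).2 h2⟩

/-- Adjacency from a list of edges. -/
def gAdj : List (ℕ × ℕ) → ℕ → ℕ → Bool
  | [], _, _ => false
  | p :: t, a, b => (p.1 == a && p.2 == b) || (p.1 == b && p.2 == a) || gAdj t a b

lemma gAdj_symm (l : List (ℕ × ℕ)) (a b : ℕ) : gAdj l a b = gAdj l b a := by
  induction l with
  | nil => rfl
  | cons p t ih =>
    simp only [gAdj, ih]
    ac_rfl

/-- A graph on `Fin n` from a list of edges. -/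
def graphOf (n : ℕ) (l : List (ℕ × ℕ)) : SimpleGraph (Fin n) where
  Adj a b := a ≠ b ∧ gAdj l a.val b.val = true
  symm := by
    constructor
    rintro a b ⟨h1, h2⟩
    exact ⟨h1.symm, by rwa [gAdj_symm]⟩
  loopless := ⟨fun a ha => ha.1 rfl⟩

instance graphOf.dec (n : ℕ) (l : List (ℕ × ℕ)) : DecidableRel (graphOf n l).Adj :=
  fun x y => inferInstanceAs (Decidable (x ≠ y ∧ gAdj l x.val y.val = true))




lemma tree_leaf_nonempty {V : Type} [Fintype V] (G : SimpleGraph V) (v : V)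
    (hT : G.IsTree) : (leafDistSet G v).Nonempty := by
  classical
  by_cases h : ∃ u : V, G.degree u ≤ 1
  · obtain ⟨u, hu⟩ := h
    exact ⟨G.dist v u, u, by
      rw [Nat.card_eq_fintype_card, G.card_neighborSet_eq_degree]; exact hu, rfl⟩
  · exfalso
    push_neg at h
    have hE : G.edgeFinset.card + 1 = Fintype.card V := hT.card_edgeFinset
    have hsum : ∑ u, G.degree u = 2 * G.edgeFinset.card :=
      G.sum_degrees_eq_twice_card_edges
    have hge : Fintype.card V * 2 ≤ ∑ u, G.degree u := by
      calc Fintype.card V * 2 = ∑ _u : V, 2 := by simp [Finset.sum_const, mul_comm]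
      _ ≤ ∑ u, G.degree u := Finset.sum_le_sum (fun u _ => h u)
    have hpos : 0 < Fintype.card V := by
      have := hT.isConnected.nonempty
      exact Fintype.card_pos
    omega

lemma subsingleton_of_card_le_one {V : Type} [Fintype V] {S : Set V}
    (hcard : Nat.card S ≤ 1) {a b : V} (ha : a ∈ S) (hb : b ∈ S) : a = b := by
  by_contra hne
  have h2 : 1 < S.ncard := (Set.one_lt_ncard (Set.toFinite S)).2 ⟨a, ha, b, hb, hne⟩
  rw [← Nat.card_coe_set_eq] at h2
  omega

lemma tree_01 {V : Type} [Fintype V] (G : SimpleGraph V) (v : V) (hT : G.IsTree)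
    (h0 : 0 ∈ leafDistSet G v) (h1 : 1 ∈ leafDistSet G v) :
    leafDistSet G v ⊆ {0, 1} := by
  classical
  obtain ⟨u0, hleaf0, hd0⟩ := h0
  obtain ⟨u, hleafu, hd1⟩ := h1
  have hc := hT.isConnected
  have hv0 : v = u0 := hc.dist_eq_zero_iff.1 hd0
  subst hv0
  have hadj : G.Adj v u := SimpleGraph.dist_eq_one_iff_adj.1 hd1
  have step : ∀ a, (a = v ∨ a = u) → ∀ x, G.Adj a x → (x = v ∨ x = u) := by
    rintro a (rfl | rfl) x hx
    · exact Or.inr (subsingleton_of_card_le_one hleaf0 hx hadj)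
    · exact Or.inl (subsingleton_of_card_le_one hleafu hx hadj.symm)
  have walkcl : ∀ (a w : V) (_ : G.Walk a w), (a = v ∨ a = u) → (w = v ∨ w = u) := by
    intro a w p
    induction p with
    | nil => exact id
    | cons h q ih => exact fun ha => ih (step _ ha _ h)
  rintro d ⟨w, hw, rfl⟩
  have hvw : w = v ∨ w = u := (hc v w).elim fun p => walkcl v w p (Or.inl rfl)
  rcases hvw with rfl | rfl
  · left; exact hc.dist_eq_zero_iff.2 rfl
  · right; exact hd1

lemma build {n : ℕ} (G : SimpleGraph (Fin n)) (v : Fin n) (hT : G.IsTree) (hn : n ≤ 7)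
    (L : Set ℕ)
    (h0 : 0 ∈ leafDistSet G v ↔ 0 ∈ L) (h1 : 1 ∈ leafDistSet G v ↔ 1 ∈ L)
    (h2 : 2 ∈ leafDistSet G v ↔ 2 ∈ L)
    (h3 : 3 ∈ leafDistSet G v ↔ (L \ {0,1,2}).Nonempty) :
    ∃ (V : Type) (_ : Fintype V) (R : SimpleGraph V) (v : V),
      R.IsTree ∧ Nat.card V ≤ 7 ∧
      leafDistSet R v ∩ {0, 1, 2} = L ∩ {0, 1, 2} ∧
      (3 ∈ leafDistSet R v ↔ (L \ {0, 1, 2}).Nonempty) := by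
  refine ⟨Fin n, inferInstance, G, v, hT, ?_, ?_, h3⟩
  · rw [Nat.card_eq_fintype_card, Fintype.card_fin]; exact hn
  · ext x
    simp only [Set.mem_inter_iff, Set.mem_insert_iff, Set.mem_singleton_iff]
    constructor
    · rintro ⟨hx, (rfl | rfl | rfl)⟩
      exacts [⟨h0.1 hx, Or.inl rfl⟩, ⟨h1.1 hx, Or.inr (Or.inl rfl)⟩,
        ⟨h2.1 hx, Or.inr (Or.inr rfl)⟩]
    · rintro ⟨hx, (rfl | rfl | rfl)⟩
      exacts [⟨h0.2 hx, Or.inl rfl⟩, ⟨h1.2 hx, Or.inr (Or.inl rfl)⟩,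
        ⟨h2.2 hx, Or.inr (Or.inr rfl)⟩]

abbrev G1 : SimpleGraph (Fin 7) := graphOf 7 [(0,1),(1,2),(2,3),(0,4),(4,5),(5,6)]
lemma G1_tree : G1.IsTree := isTree_of_checks' 0 6 (by decide) (by decide) (by decide)
lemma G1_conn : G1.Connected := connected_of_reachIn 0 6 (by decide)
lemma G1_n0 : 0 ∉ leafDistSet G1 0 := fun h => absurd ((mem_leafDistSet_iff G1_conn 0 0).1 h) (by decide)
lemma G1_n1 : 1 ∉ leafDistSet G1 0 := fun h => absurd ((mem_leafDistSet_iff G1_conn 0 1).1 h) (by decide)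
lemma G1_n2 : 2 ∉ leafDistSet G1 0 := fun h => absurd ((mem_leafDistSet_iff G1_conn 0 2).1 h) (by decide)
lemma G1_m3 : 3 ∈ leafDistSet G1 0 := (mem_leafDistSet_iff G1_conn 0 3).2 (by decide)

abbrev G2 : SimpleGraph (Fin 1) := graphOf 1 []
lemma G2_tree : G2.IsTree := isTree_of_checks' 0 0 (by decide) (by decide) (by decide)
lemma G2_conn : G2.Connected := connected_of_reachIn 0 0 (by decide)
lemma G2_m0 : 0 ∈ leafDistSet G2 0 := (mem_leafDistSet_iff G2_conn 0 0).2 (by decide)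
lemma G2_n1 : 1 ∉ leafDistSet G2 0 := fun h => absurd ((mem_leafDistSet_iff G2_conn 0 1).1 h) (by decide)
lemma G2_n2 : 2 ∉ leafDistSet G2 0 := fun h => absurd ((mem_leafDistSet_iff G2_conn 0 2).1 h) (by decide)
lemma G2_n3 : 3 ∉ leafDistSet G2 0 := fun h => absurd ((mem_leafDistSet_iff G2_conn 0 3).1 h) (by decide)

abbrev G3 : SimpleGraph (Fin 4) := graphOf 4 [(0,1),(1,2),(2,3)]
lemma G3_tree : G3.IsTree := isTree_of_checks' 0 3 (by decide) (by decide) (by decide)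
lemma G3_conn : G3.Connected := connected_of_reachIn 0 3 (by decide)
lemma G3_m0 : 0 ∈ leafDistSet G3 0 := (mem_leafDistSet_iff G3_conn 0 0).2 (by decide)
lemma G3_n1 : 1 ∉ leafDistSet G3 0 := fun h => absurd ((mem_leafDistSet_iff G3_conn 0 1).1 h) (by decide)
lemma G3_n2 : 2 ∉ leafDistSet G3 0 := fun h => absurd ((mem_leafDistSet_iff G3_conn 0 2).1 h) (by decide)
lemma G3_m3 : 3 ∈ leafDistSet G3 0 := (mem_leafDistSet_iff G3_conn 0 3).2 (by decide)

abbrev G4 : SimpleGraph (Fin 3) := graphOf 3 [(0,1),(0,2)]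
lemma G4_tree : G4.IsTree := isTree_of_checks' 0 2 (by decide) (by decide) (by decide)
lemma G4_conn : G4.Connected := connected_of_reachIn 0 2 (by decide)
lemma G4_n0 : 0 ∉ leafDistSet G4 0 := fun h => absurd ((mem_leafDistSet_iff G4_conn 0 0).1 h) (by decide)
lemma G4_m1 : 1 ∈ leafDistSet G4 0 := (mem_leafDistSet_iff G4_conn 0 1).2 (by decide)
lemma G4_n2 : 2 ∉ leafDistSet G4 0 := fun h => absurd ((mem_leafDistSet_iff G4_conn 0 2).1 h) (by decide)
lemma G4_n3 : 3 ∉ leafDistSet G4 0 := fun h => absurd ((mem_leafDistSet_iff G4_conn 0 3).1 h) (by decide)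

abbrev G5 : SimpleGraph (Fin 5) := graphOf 5 [(0,1),(0,2),(2,3),(3,4)]
lemma G5_tree : G5.IsTree := isTree_of_checks' 0 4 (by decide) (by decide) (by decide)
lemma G5_conn : G5.Connected := connected_of_reachIn 0 4 (by decide)
lemma G5_n0 : 0 ∉ leafDistSet G5 0 := fun h => absurd ((mem_leafDistSet_iff G5_conn 0 0).1 h) (by decide)
lemma G5_m1 : 1 ∈ leafDistSet G5 0 := (mem_leafDistSet_iff G5_conn 0 1).2 (by decide)
lemma G5_n2 : 2 ∉ leafDistSet G5 0 := fun h => absurd ((mem_leafDistSet_iff G5_conn 0 2).1 h) (by decide)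
lemma G5_m3 : 3 ∈ leafDistSet G5 0 := (mem_leafDistSet_iff G5_conn 0 3).2 (by decide)

abbrev G6 : SimpleGraph (Fin 5) := graphOf 5 [(0,1),(1,2),(0,3),(3,4)]
lemma G6_tree : G6.IsTree := isTree_of_checks' 0 4 (by decide) (by decide) (by decide)
lemma G6_conn : G6.Connected := connected_of_reachIn 0 4 (by decide)
lemma G6_n0 : 0 ∉ leafDistSet G6 0 := fun h => absurd ((mem_leafDistSet_iff G6_conn 0 0).1 h) (by decide)
lemma G6_n1 : 1 ∉ leafDistSet G6 0 := fun h => absurd ((mem_leafDistSet_iff G6_conn 0 1).1 h) (by decide)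
lemma G6_m2 : 2 ∈ leafDistSet G6 0 := (mem_leafDistSet_iff G6_conn 0 2).2 (by decide)
lemma G6_n3 : 3 ∉ leafDistSet G6 0 := fun h => absurd ((mem_leafDistSet_iff G6_conn 0 3).1 h) (by decide)

abbrev G7 : SimpleGraph (Fin 6) := graphOf 6 [(0,1),(1,2),(0,3),(3,4),(4,5)]
lemma G7_tree : G7.IsTree := isTree_of_checks' 0 5 (by decide) (by decide) (by decide)
lemma G7_conn : G7.Connected := connected_of_reachIn 0 5 (by decide)
lemma G7_n0 : 0 ∉ leafDistSet G7 0 := fun h => absurd ((mem_leafDistSet_iff G7_conn 0 0).1 h) (by decide)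
lemma G7_n1 : 1 ∉ leafDistSet G7 0 := fun h => absurd ((mem_leafDistSet_iff G7_conn 0 1).1 h) (by decide)
lemma G7_m2 : 2 ∈ leafDistSet G7 0 := (mem_leafDistSet_iff G7_conn 0 2).2 (by decide)
lemma G7_m3 : 3 ∈ leafDistSet G7 0 := (mem_leafDistSet_iff G7_conn 0 3).2 (by decide)

abbrev G8 : SimpleGraph (Fin 4) := graphOf 4 [(0,1),(0,2),(2,3)]
lemma G8_tree : G8.IsTree := isTree_of_checks' 0 3 (by decide) (by decide) (by decide)
lemma G8_conn : G8.Connected := connected_of_reachIn 0 3 (by decide)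
lemma G8_n0 : 0 ∉ leafDistSet G8 0 := fun h => absurd ((mem_leafDistSet_iff G8_conn 0 0).1 h) (by decide)
lemma G8_m1 : 1 ∈ leafDistSet G8 0 := (mem_leafDistSet_iff G8_conn 0 1).2 (by decide)
lemma G8_m2 : 2 ∈ leafDistSet G8 0 := (mem_leafDistSet_iff G8_conn 0 2).2 (by decide)
lemma G8_n3 : 3 ∉ leafDistSet G8 0 := fun h => absurd ((mem_leafDistSet_iff G8_conn 0 3).1 h) (by decide)

abbrev G9 : SimpleGraph (Fin 7) := graphOf 7 [(0,1),(0,2),(2,3),(0,4),(4,5),(5,6)]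
lemma G9_tree : G9.IsTree := isTree_of_checks' 0 6 (by decide) (by decide) (by decide)
lemma G9_conn : G9.Connected := connected_of_reachIn 0 6 (by decide)
lemma G9_n0 : 0 ∉ leafDistSet G9 0 := fun h => absurd ((mem_leafDistSet_iff G9_conn 0 0).1 h) (by decide)
lemma G9_m1 : 1 ∈ leafDistSet G9 0 := (mem_leafDistSet_iff G9_conn 0 1).2 (by decide)
lemma G9_m2 : 2 ∈ leafDistSet G9 0 := (mem_leafDistSet_iff G9_conn 0 2).2 (by decide)
lemma G9_m3 : 3 ∈ leafDistSet G9 0 := (mem_leafDistSet_iff G9_conn 0 3).2 (by decide)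

abbrev G10 : SimpleGraph (Fin 2) := graphOf 2 [(0,1)]
lemma G10_tree : G10.IsTree := isTree_of_checks' 0 1 (by decide) (by decide) (by decide)
lemma G10_conn : G10.Connected := connected_of_reachIn 0 1 (by decide)
lemma G10_m0 : 0 ∈ leafDistSet G10 0 := (mem_leafDistSet_iff G10_conn 0 0).2 (by decide)
lemma G10_m1 : 1 ∈ leafDistSet G10 0 := (mem_leafDistSet_iff G10_conn 0 1).2 (by decide)
lemma G10_n2 : 2 ∉ leafDistSet G10 0 := fun h => absurd ((mem_leafDistSet_iff G10_conn 0 2).1 h) (by decide)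
lemma G10_n3 : 3 ∉ leafDistSet G10 0 := fun h => absurd ((mem_leafDistSet_iff G10_conn 0 3).1 h) (by decide)

abbrev G11 : SimpleGraph (Fin 3) := graphOf 3 [(0,1),(1,2)]
lemma G11_tree : G11.IsTree := isTree_of_checks' 0 2 (by decide) (by decide) (by decide)
lemma G11_conn : G11.Connected := connected_of_reachIn 0 2 (by decide)
lemma G11_m0 : 0 ∈ leafDistSet G11 0 := (mem_leafDistSet_iff G11_conn 0 0).2 (by decide)
lemma G11_n1 : 1 ∉ leafDistSet G11 0 := fun h => absurd ((mem_leafDistSet_iff G11_conn 0 1).1 h) (by decide)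
lemma G11_m2 : 2 ∈ leafDistSet G11 0 := (mem_leafDistSet_iff G11_conn 0 2).2 (by decide)
lemma G11_n3 : 3 ∉ leafDistSet G11 0 := fun h => absurd ((mem_leafDistSet_iff G11_conn 0 3).1 h) (by decide)

abbrev G12 : SimpleGraph (Fin 5) := graphOf 5 [(0,1),(1,2),(1,3),(3,4)]
lemma G12_tree : G12.IsTree := isTree_of_checks' 0 4 (by decide) (by decide) (by decide)
lemma G12_conn : G12.Connected := connected_of_reachIn 0 4 (by decide)
lemma G12_m0 : 0 ∈ leafDistSet G12 0 := (mem_leafDistSet_iff G12_conn 0 0).2 (by decide)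
lemma G12_n1 : 1 ∉ leafDistSet G12 0 := fun h => absurd ((mem_leafDistSet_iff G12_conn 0 1).1 h) (by decide)
lemma G12_m2 : 2 ∈ leafDistSet G12 0 := (mem_leafDistSet_iff G12_conn 0 2).2 (by decide)
lemma G12_m3 : 3 ∈ leafDistSet G12 0 := (mem_leafDistSet_iff G12_conn 0 3).2 (by decide)

/-- For every admissible finite set `L ⊆ ℕ ∪ {0}` there is a tree `R` on at
most 7 vertices and a vertex `v` of `R` such that `L(v) ∩ {0,1,2} = L ∩ {0,1,2}` and
`3 ∈ L(v)` iff `L \ {0,1,2}` is nonempty. -/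
theorem admissible_small_tree (L : Set ℕ) (hfin : L.Finite) (hL : Admissible L) :
    ∃ (V : Type) (_ : Fintype V) (R : SimpleGraph V) (v : V),
      R.IsTree ∧ Nat.card V ≤ 7 ∧
      leafDistSet R v ∩ {0, 1, 2} = L ∩ {0, 1, 2} ∧
      (3 ∈ leafDistSet R v ↔ (L \ {0, 1, 2}).Nonempty) := by
  classical
  obtain ⟨W, hW, G0, w0, hT0, hLeq⟩ := hL
  haveI := hW
  have hNE : L.Nonempty := by rw [hLeq]; exact tree_leaf_nonempty G0 w0 hT0
  have H01 : 0 ∈ L → 1 ∈ L → L ⊆ {0, 1} := by rw [hLeq]; exact tree_01 G0 w0 hT0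
  by_cases h0 : (0 : ℕ) ∈ L <;> by_cases h1 : (1 : ℕ) ∈ L <;>
    by_cases h2 : (2 : ℕ) ∈ L <;> by_cases hb : (L \ {0, 1, 2}).Nonempty
  · -- impossible: 0,1,2 ∈ L
    exact absurd (H01 h0 h1 h2) (by simp)
  · -- impossible: 0,1,2 ∈ L
    exact absurd (H01 h0 h1 h2) (by simp)
  · -- impossible: 0,1 ∈ L and large element
    obtain ⟨d, hd, hdn⟩ := hb
    have := H01 h0 h1 hd
    simp only [Set.mem_insert_iff, Set.mem_singleton_iff] at this hdn
    tauto
  · exact build G10 0 G10_tree (by norm_num) L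
      (iff_of_true G10_m0 h0) (iff_of_true G10_m1 h1) (iff_of_false G10_n2 h2) (iff_of_false G10_n3 hb)
  · exact build G12 0 G12_tree (by norm_num) L
      (iff_of_true G12_m0 h0) (iff_of_false G12_n1 h1) (iff_of_true G12_m2 h2) (iff_of_true G12_m3 hb)
  · exact build G11 0 G11_tree (by norm_num) L
      (iff_of_true G11_m0 h0) (iff_of_false G11_n1 h1) (iff_of_true G11_m2 h2) (iff_of_false G11_n3 hb)
  · exact build G3 0 G3_tree (by norm_num) L
      (iff_of_true G3_m0 h0) (iff_of_false G3_n1 h1) (iff_of_false G3_n2 h2) (iff_of_true G3_m3 hb)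
  · exact build G2 0 G2_tree (by norm_num) L
      (iff_of_true G2_m0 h0) (iff_of_false G2_n1 h1) (iff_of_false G2_n2 h2) (iff_of_false G2_n3 hb)
  · exact build G9 0 G9_tree (by norm_num) L
      (iff_of_false G9_n0 h0) (iff_of_true G9_m1 h1) (iff_of_true G9_m2 h2) (iff_of_true G9_m3 hb)
  · exact build G8 0 G8_tree (by norm_num) L
      (iff_of_false G8_n0 h0) (iff_of_true G8_m1 h1) (iff_of_true G8_m2 h2) (iff_of_false G8_n3 hb)
  · exact build G5 0 G5_tree (by norm_num) L
      (iff_of_false G5_n0 h0) (iff_of_true G5_m1 h1) (iff_of_false G5_n2 h2) (iff_of_true G5_m3 hb)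
  · exact build G4 0 G4_tree (by norm_num) L
      (iff_of_false G4_n0 h0) (iff_of_true G4_m1 h1) (iff_of_false G4_n2 h2) (iff_of_false G4_n3 hb)
  · exact build G7 0 G7_tree (by norm_num) L
      (iff_of_false G7_n0 h0) (iff_of_false G7_n1 h1) (iff_of_true G7_m2 h2) (iff_of_true G7_m3 hb)
  · exact build G6 0 G6_tree (by norm_num) L
      (iff_of_false G6_n0 h0) (iff_of_false G6_n1 h1) (iff_of_true G6_m2 h2) (iff_of_false G6_n3 hb)
  · exact build G1 0 G1_tree (by norm_num) L
      (iff_of_false G1_n0 h0) (iff_of_false G1_n1 h1) (iff_of_false G1_n2 h2) (iff_of_true G1_m3 hb)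
  · -- impossible: L empty-ish
    obtain ⟨d, hd⟩ := hNE
    exact absurd ⟨hd, by rintro (rfl | rfl | rfl) <;> tauto⟩ (fun hc => hb ⟨d, hc⟩)
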